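/- Let μ = g/(2c²) and E = [[0, k−iμ, 0],[ig, 0, k−iμ],[0, c²(k−iμ), 0]] with g,k,c real, c>0. Then the eigenvalues of E are ω₁ = 0 and ω_{2,3} = ±c√(k²+μ²); in particular all eigenvalues are real. -/
import Mathlib


/-- Eigenvalues of the Fourier symbol of the transformed acoustics-with-gravity system:
with μ = g/(2c²), E = [[0,k−iμ,0],[ig,0,k−iμ],[0,c²(k−iμ),0]] has the real eigenvalues
0 and ±c√(k²+μ²). -/
theorem stmt_11 (g k c : ℝ) (hc : 0 < c) (μ : ℝ) (hμ : μ = g / (2 * c ^ 2)) (ω : ℂ) :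
    (Matrix.det
        ((!![0, (k:ℂ) - Complex.I * (μ:ℂ), 0;
             Complex.I * (g:ℂ), 0, (k:ℂ) - Complex.I * (μ:ℂ);
             0, (c:ℂ)^2 * ((k:ℂ) - Complex.I * (μ:ℂ)), 0]) - ω • 1) = 0)
    ↔ (ω = 0 ∨ ω = ((c * Real.sqrt (k ^ 2 + μ ^ 2) : ℝ) : ℂ)
        ∨ ω = -((c * Real.sqrt (k ^ 2 + μ ^ 2) : ℝ) : ℂ)) := by
  have hg : (g : ℝ) = 2 * c ^ 2 * μ := by
    field_simp at hμ; linarith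
  set s : ℝ := c * Real.sqrt (k ^ 2 + μ ^ 2) with hs
  have hs2 : (s : ℂ) ^ 2 = (c : ℂ) ^ 2 * ((k : ℂ) ^ 2 + (μ : ℂ) ^ 2) := by
    have : s ^ 2 = c ^ 2 * (k ^ 2 + μ ^ 2) := by
      rw [hs, mul_pow, Real.sq_sqrt (by positivity)]
    have h2 := congrArg Complex.ofReal this
    push_cast at h2
    linear_combination h2
  have hdet : Matrix.det
        ((!![0, (k:ℂ) - Complex.I * (μ:ℂ), 0;
             Complex.I * (g:ℂ), 0, (k:ℂ) - Complex.I * (μ:ℂ);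
             0, (c:ℂ)^2 * ((k:ℂ) - Complex.I * (μ:ℂ)), 0]) - ω • 1)
      = ω * (((s:ℂ)) - ω) * (((s:ℂ)) + ω) := by
    simp [Matrix.det_fin_three, Matrix.one_apply, Matrix.smul_apply]
    have hI : Complex.I ^ 2 = -1 := Complex.I_sq
    have hgc : (g : ℂ) = 2 * (c : ℂ) ^ 2 * (μ : ℂ) := by exact_mod_cast congrArg Complex.ofReal hg
    rw [hgc]
    linear_combination -ω * (μ:ℂ)^2 * (c:ℂ)^2 * hI - ω * hs2
  rw [hdet]
  constructor
  · intro h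
    rcases mul_eq_zero.mp h with h | h
    · rcases mul_eq_zero.mp h with h | h
      · exact Or.inl h
      · exact Or.inr (Or.inl (by linear_combination -h))
    · exact Or.inr (Or.inr (by linear_combination h))
  · rintro (h | h | h) <;> subst h <;> ring
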